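/- Key induction inequality for monotonicity: Let a_1,...,a_k be items with weights w(a_1) ≥ ... ≥ w(a_k), and ū(a_i) ≥ u(a_i) with ū(a_i), u(a_i) ∈ [0,1] for all i. Then Σ_{i=1}^{k} ∏_{j<i}(1-ū(a_j))·ū(a_i)·w(a_i) − Σ_{i=1}^{k} ∏_{j<i}(1-u(a_j))·u(a_i)·w(a_i) ≥ Σ_{ℓ=1}^{k} [∏_{j<ℓ}(1-ū(a_j))] · (ū(a_ℓ) − u(a_ℓ)) · [∏_{j=ℓ+1}^{k}(1-u(a_j))] · w(a_k). -/

import Mathlib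

/-- The cascading reward function. -/
noncomputable def cascadeF {α : Type*} (u w : α → ℝ) : List α → ℝ
  | [] => 0
  | a :: t => u a * w a + (1 - u a) * cascadeF u w t

lemma cascade_upper {α : Type*} (w u : α → ℝ) (c m : ℝ) :
    ∀ L : List α, (∀ a ∈ L, 0 ≤ u a ∧ u a ≤ 1) → (∀ a ∈ L, w a ≤ c) → m ≤ c →
    cascadeF u w L + (L.map (fun a => 1 - u a)).prod * m ≤ c := by
  intro L
  induction L with
  | nil => intro _ _ h; simpa [cascadeF] using h
  | cons b T ih =>
    intro hu hw hm
    have hub := hu b (by simp)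
    have ih' := ih (fun a ha => hu a (by simp [ha])) (fun a ha => hw a (by simp [ha])) hm
    have h1 : u b * w b ≤ u b * c := mul_le_mul_of_nonneg_left (hw b (by simp)) hub.1
    have h2 : (1 - u b) * (cascadeF u w T + (T.map (fun a => 1 - u a)).prod * m)
        ≤ (1 - u b) * c := mul_le_mul_of_nonneg_left ih' (by linarith [hub.2])
    simp only [cascadeF, List.map_cons, List.prod_cons]
    nlinarith [h1, h2]

lemma prod_one_sub_nonneg {α : Type*} (u : α → ℝ) (L : List α)
    (hu : ∀ a ∈ L, 0 ≤ u a ∧ u a ≤ 1) : 0 ≤ (L.map (fun a => 1 - u a)).prod := by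
  induction L with
  | nil => simp
  | cons b T ih =>
    simp only [List.map_cons, List.prod_cons]
    have := hu b (by simp)
    exact mul_nonneg (by linarith [this.2]) (ih (fun a ha => hu a (by simp [ha])))

lemma aux_key {α : Type*} (w ubar u : α → ℝ) (m : ℝ) :
    ∀ L : List α, L.Pairwise (fun a b => w b ≤ w a) →
    (∀ a ∈ L, 0 ≤ u a ∧ u a ≤ 1) → (∀ a ∈ L, 0 ≤ ubar a ∧ ubar a ≤ 1) →
    (∀ a ∈ L, u a ≤ ubar a) → (∀ a ∈ L, m ≤ w a) →
    ∑ ℓ : Fin L.length,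
        ((L.take ℓ).map (fun a => 1 - ubar a)).prod
          * (ubar (L.get ℓ) - u (L.get ℓ))
          * ((L.drop (ℓ + 1)).map (fun a => 1 - u a)).prod * m
      ≤ cascadeF ubar w L - cascadeF u w L := by
  intro L
  induction L with
  | nil => simp [cascadeF]
  | cons a t ih =>
    intro hsort hu hubar hge hm
    have hsort' := hsort.of_cons
    have htail : ∀ b ∈ t, w b ≤ w a := fun b hb => (List.pairwise_cons.mp hsort).1 b hb
    have ih' := ih hsort' (fun x hx => hu x (by simp [hx])) (fun x hx => hubar x (by simp [hx]))
      (fun x hx => hge x (by simp [hx])) (fun x hx => hm x (by simp [hx]))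
    have hua := hu a (by simp)
    have huba := hubar a (by simp)
    have hga := hge a (by simp)
    have hma := hm a (by simp)
    -- split sum
    rw [show (∑ ℓ : Fin (a :: t).length,
        (((a::t).take ℓ).map (fun x => 1 - ubar x)).prod * (ubar ((a::t).get ℓ) - u ((a::t).get ℓ))
          * (((a::t).drop (ℓ + 1)).map (fun x => 1 - u x)).prod * m)
      = ∑ ℓ : Fin (t.length + 1),
        (((a::t).take ℓ).map (fun x => 1 - ubar x)).prod * (ubar ((a::t).get ℓ) - u ((a::t).get ℓ))
          * (((a::t).drop (ℓ + 1)).map (fun x => 1 - u x)).prod * m from rfl,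
      Fin.sum_univ_succ]
    simp only [Fin.val_succ, List.take_succ_cons, List.drop_succ_cons, List.map_cons,
      List.prod_cons, List.take_zero, List.prod_nil, List.map_nil, Fin.val_zero,
      List.get_cons_succ, List.get_cons_zero, List.drop_zero]
    have hprod : (t.map (fun x => 1 - u x)).prod * m ≤ w a - cascadeF u w t := by
      have := cascade_upper w u (w a) m t (fun x hx => hu x (by simp [hx])) htail hma
      linarith
    have h0 : (ubar a - u a) * ((t.map (fun x => 1 - u x)).prod * m)
        ≤ (ubar a - u a) * (w a - cascadeF u w t) :=
      mul_le_mul_of_nonneg_left hprod (by linarith)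
    have h1 : (1 - ubar a) * (∑ i : Fin t.length,
        ((t.take i).map (fun x => 1 - ubar x)).prod * (ubar (t.get i) - u (t.get i))
          * ((t.drop (i + 1)).map (fun x => 1 - u x)).prod * m)
        ≤ (1 - ubar a) * (cascadeF ubar w t - cascadeF u w t) :=
      mul_le_mul_of_nonneg_left ih' (by linarith [huba.2])
    have hsum : ∑ i : Fin t.length, (1 - ubar a) *
          (((t.take i).map (fun x => 1 - ubar x)).prod * (ubar (t.get i) - u (t.get i))
          * ((t.drop (i + 1)).map (fun x => 1 - u x)).prod * m)
        = (1 - ubar a) * (∑ i : Fin t.length,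
          ((t.take i).map (fun x => 1 - ubar x)).prod * (ubar (t.get i) - u (t.get i))
          * ((t.drop (i + 1)).map (fun x => 1 - u x)).prod * m) := by
      rw [Finset.mul_sum]
    simp only [cascadeF]
    calc 1 * (ubar a - u a) * (t.map (fun x => 1 - u x)).prod * m
          + ∑ i : Fin t.length, (1 - ubar a) * ((t.take i).map (fun x => 1 - ubar x)).prod
            * (ubar (t.get i) - u (t.get i)) * ((t.drop (i + 1)).map (fun x => 1 - u x)).prod * m
        = (ubar a - u a) * ((t.map (fun x => 1 - u x)).prod * m)
          + ∑ i : Fin t.length, (1 - ubar a) *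
            (((t.take i).map (fun x => 1 - ubar x)).prod * (ubar (t.get i) - u (t.get i))
            * ((t.drop (i + 1)).map (fun x => 1 - u x)).prod * m) := by
            congr 1; · ring
            · exact Finset.sum_congr rfl (fun i _ => by ring)
      _ ≤ (ubar a - u a) * (w a - cascadeF u w t)
          + (1 - ubar a) * (cascadeF ubar w t - cascadeF u w t) := by
            rw [hsum]; exact add_le_add h0 h1
      _ = ubar a * w a + (1 - ubar a) * cascadeF ubar w t
          - (u a * w a + (1 - u a) * cascadeF u w t) := by ring

lemma getLast_min {α : Type*} (w : α → ℝ) :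
    ∀ (L : List α) (hne : L ≠ []), L.Pairwise (fun a b => w b ≤ w a) →
    ∀ a ∈ L, w (L.getLast hne) ≤ w a := by
  intro L
  induction L with
  | nil => intro h; exact absurd rfl h
  | cons b t ih =>
    intro hne hsort x hx
    cases t with
    | nil => simp at hx; subst hx; simp [List.getLast]
    | cons c s =>
      have h1 : (b :: c :: s).getLast hne = (c :: s).getLast (by simp) := by
        simp [List.getLast]
      rw [h1]
      rcases List.mem_cons.mp hx with h | h
      · subst h
        exact (List.pairwise_cons.mp hsort).1 _ (List.getLast_mem _)
      · exact ih (by simp) hsort.of_cons x h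

theorem key_induction_inequality {α : Type*} (w ubar u : α → ℝ)
    (L : List α) (hne : L ≠ [])
    (hsort : L.Pairwise (fun a b => w b ≤ w a))
    (hu : ∀ a ∈ L, 0 ≤ u a ∧ u a ≤ 1)
    (hubar : ∀ a ∈ L, 0 ≤ ubar a ∧ ubar a ≤ 1)
    (hge : ∀ a ∈ L, u a ≤ ubar a) :
    ∑ ℓ : Fin L.length,
        ((L.take ℓ).map (fun a => 1 - ubar a)).prod
          * (ubar (L.get ℓ) - u (L.get ℓ))
          * ((L.drop (ℓ + 1)).map (fun a => 1 - u a)).prod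
          * w (L.getLast hne)
      ≤ cascadeF ubar w L - cascadeF u w L :=
  aux_key w ubar u (w (L.getLast hne)) L hsort hu hubar hge (getLast_min w L hne hsort)
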